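/- Let p be a free ultrafilter on ω, G a topological abelian group, φ : Q^(κ) → G a group homomorphism from the direct sum of κ copies of ℚ, M a ℚ-linear subspace of (Q^(κ))^ω, and B ⊆ M a set such that {[f]_p : f ∈ B} is a basis of the image of M in the ultrapower of Q^(κ) by p. Suppose that for each f ∈ B and each N ∈ ℕ⁺, the sequence (φ((1/N)·f(n)))_{n∈ω} has a p-limit a_{N,f} in G. Then for every h ∈ M, the sequence (φ(h(n)))_{n∈ω} has a p-limit in G, and this p-limit lies in the subgroup of G generated by {a_{N,f} : N ∈ ℕ⁺, f ∈ B}. -/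

import Mathlib

open Filter

/-- If B ⊆ M has p-linearly independent germs spanning the image of M in the
ultrapower of ℚ^(κ), and for each f ∈ B and N ∈ ℕ⁺ the sequence (φ((1/N)·f(n)))ₙ
has a p-limit, then for every h ∈ M the sequence (φ(h(n)))ₙ has a p-limit, which
lies in the subgroup generated by the p-limits a_{N,f}. -/
theorem stmt_5 {κ : Type*} {G : Type*} [AddCommGroup G] [TopologicalSpace G]
    [IsTopologicalAddGroup G] [T2Space G]
    (p : Ultrafilter ℕ) (hfree : (p : Filter ℕ) ≤ Filter.cofinite)
    (φ : (κ →₀ ℚ) →+ G) (M : Submodule ℚ (ℕ → (κ →₀ ℚ)))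
    (B : Set (ℕ → (κ →₀ ℚ))) (hBM : B ⊆ (M : Set (ℕ → (κ →₀ ℚ))))
    (hind : LinearIndependent ℚ
      (fun f : B => ((f : ℕ → (κ →₀ ℚ)) : (p : Filter ℕ).Germ (κ →₀ ℚ))))
    (hspan : ∀ h ∈ M, ((h : ℕ → (κ →₀ ℚ)) : (p : Filter ℕ).Germ (κ →₀ ℚ)) ∈
      Submodule.span ℚ
        ((fun f : ℕ → (κ →₀ ℚ) => ((f : (p : Filter ℕ).Germ (κ →₀ ℚ)))) '' B))
    (hlim : ∀ f ∈ B, ∀ N : ℕ, 0 < N →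
      ∃ a : G, Filter.Tendsto (fun n => φ ((N : ℚ)⁻¹ • f n)) (p : Filter ℕ) (nhds a)) :
    ∀ h ∈ M, ∃ L : G,
      Filter.Tendsto (fun n => φ (h n)) (p : Filter ℕ) (nhds L) ∧
      L ∈ AddSubgroup.closure {a : G | ∃ f ∈ B, ∃ N : ℕ, 0 < N ∧
        Filter.Tendsto (fun n => φ ((N : ℚ)⁻¹ • f n)) (p : Filter ℕ) (nhds a)} := by
  intro h hh
  obtain ⟨n, c, g, hg⟩ := Submodule.mem_span_set'.1 (hspan h hh)
  choose b hbB hbg using fun i : Fin n => (g i).2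
  -- coe to germ as a linear map
  let Φ : (ℕ → (κ →₀ ℚ)) →ₗ[ℚ] (p : Filter ℕ).Germ (κ →₀ ℚ) :=
    { toFun := fun f => (f : (p : Filter ℕ).Germ (κ →₀ ℚ))
      map_add' := fun f g => rfl
      map_smul' := fun c f => rfl }
  have key : ((h : ℕ → (κ →₀ ℚ)) : (p : Filter ℕ).Germ (κ →₀ ℚ))
      = ((∑ i, c i • b i : ℕ → (κ →₀ ℚ)) : (p : Filter ℕ).Germ (κ →₀ ℚ)) := by
    rw [← hg]
    have : (((∑ i, c i • b i : ℕ → (κ →₀ ℚ))) : (p : Filter ℕ).Germ (κ →₀ ℚ))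
        = Φ (∑ i, c i • b i) := rfl
    rw [this, map_sum]
    refine Finset.sum_congr rfl fun i _ => ?_
    rw [map_smul]
    exact congrArg (c i • ·) (hbg i).symm
  have hEq : h =ᶠ[(p : Filter ℕ)] (∑ i, c i • b i : ℕ → (κ →₀ ℚ)) :=
    (Filter.Germ.coe_eq).1 key
  choose a ha using fun i : Fin n => hlim (b i) (hbB i) (c i).den (c i).pos
  have hsm : ∀ i : Fin n, ∀ v : κ →₀ ℚ, c i • v = (c i).num • (((c i).den : ℚ)⁻¹ • v) := by
    intro i v
    rw [← smul_assoc]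
    congr 1
    rw [zsmul_eq_mul, ← div_eq_mul_inv]
    exact_mod_cast (Rat.num_div_den (c i)).symm
  have hti : ∀ i : Fin n, Filter.Tendsto (fun m => φ (c i • b i m)) (p : Filter ℕ)
      (nhds ((c i).num • a i)) := by
    intro i
    have := ((continuous_zsmul ((c i).num) : Continuous fun x : G => (c i).num • x).tendsto
      (a i)).comp (ha i)
    refine this.congr fun m => ?_
    simp only [Function.comp]
    rw [hsm i, map_zsmul]
  have htot : Filter.Tendsto (fun m => φ ((∑ i, c i • b i : ℕ → (κ →₀ ℚ)) m)) (p : Filter ℕ)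
      (nhds (∑ i, (c i).num • a i)) := by
    have := tendsto_finset_sum Finset.univ (fun i _ => hti i)
    refine this.congr fun m => ?_
    simp [map_sum]
  refine ⟨∑ i, (c i).num • a i,
    htot.congr' (by filter_upwards [hEq] with m hm using by rw [hm]), ?_⟩
  refine AddSubgroup.sum_mem _ fun i _ => AddSubgroup.zsmul_mem _ ?_ _
  exact AddSubgroup.subset_closure ⟨b i, hbB i, (c i).den, (c i).pos, ha i⟩
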